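/- Let z ∈ ℂ with Re(z) < 0, N ∈ ℕ, and (d_ℓ) summable nonnegative reals. Let m̃ be the fixed point in the cone spanned by 1 and −1/z of ψ(x) = −(1/z)(1 − (1/N)∑_ℓ d_ℓ x/(1 + d_ℓ x)), and m̃_{(k)} the fixed point of the same function with the k-th term removed from the sum. Then |m̃_{(k)} − m̃| ≤ 1/(|z|·N). -/

import Mathlib

/-- For `w` with nonnegative real part, `1 ≤ |1 + w|`. -/
lemma aux_one_le_abs_one_add {w : ℂ} (hw : 0 ≤ w.re) : 1 ≤ ‖1 + w‖ := by
  calc (1:ℝ) ≤ (1 + w).re := by simp [Complex.add_re]; linarith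
  _ ≤ ‖1 + w‖ := Complex.re_le_norm _

/-- For `w` with nonnegative real part, `|w| ≤ |1 + w|`. -/
lemma aux_abs_le_abs_one_add {w : ℂ} (hw : 0 ≤ w.re) :
    ‖w‖ ≤ ‖1 + w‖ := by
  rw [Complex.norm_def, Complex.norm_def]
  apply Real.sqrt_le_sqrt
  have h := Complex.normSq_add 1 w
  simp only [Complex.normSq_one] at h
  have h1 : ((1:ℂ) * (starRingEnd ℂ) w).re = w.re := by simp
  rw [h1] at h
  nlinarith

set_option maxHeartbeats 2000000 in
/-- the fixed points `m̃` and `m̃_{(k)}` (with the `k`-th term removed)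
of the self-consistent equation satisfy `|m̃_{(k)} − m̃| ≤ 1/(|z|·N)`. -/
theorem fixed_point_remove_one_term (z : ℂ) (hz : z.re < 0) (N : ℕ) (hN : 0 < N)
    (d : ℕ → ℝ) (hd : ∀ l, 0 ≤ d l) (hsum : Summable d) (k : ℕ) (m mk : ℂ)
    (hm_cone : ∃ s t : ℝ, 0 ≤ s ∧ 0 ≤ t ∧ m = (s : ℂ) - (t : ℂ) / z)
    (hmk_cone : ∃ s t : ℝ, 0 ≤ s ∧ 0 ≤ t ∧ mk = (s : ℂ) - (t : ℂ) / z)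
    (hm : m = -(1 / z) * (1 - (1 / (N : ℂ)) *
      ∑' l, (d l : ℂ) * m / (1 + (d l : ℂ) * m)))
    (hmk : mk = -(1 / z) * (1 - (1 / (N : ℂ)) *
      ∑' l, if l = k then 0 else (d l : ℂ) * mk / (1 + (d l : ℂ) * mk))) :
    ‖mk - m‖ ≤ 1 / (‖z‖ * N) := by
  obtain ⟨s, t, hs, ht, hmeq⟩ := hm_cone
  obtain ⟨s', t', hs', ht', hmkeq⟩ := hmk_cone
  have hz0 : z ≠ 0 := by intro h; rw [h] at hz; simp at hz
  have hnsq : 0 < Complex.normSq z := Complex.normSq_pos.2 hz0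
  have hN0 : (N:ℂ) ≠ 0 := Nat.cast_ne_zero.2 hN.ne'
  have hNR : (0:ℝ) < (N:ℝ) := Nat.cast_pos.2 hN
  have habsz : 0 < ‖z‖ := norm_pos_iff.mpr hz0
  -- real parts of the cone elements are nonnegative
  have hre : ∀ (u v : ℝ), 0 ≤ u → 0 ≤ v → 0 ≤ ((u:ℂ) - (v:ℂ)/z).re := by
    intro u v hu hv
    have h1 : ((v:ℂ)/z).re = v * z.re / Complex.normSq z + 0 * z.im / Complex.normSq z := by
      rw [Complex.div_re]; simp
    have h2 : v * z.re / Complex.normSq z ≤ 0 :=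
      div_nonpos_of_nonpos_of_nonneg (mul_nonpos_of_nonneg_of_nonpos hv hz.le) hnsq.le
    simp only [Complex.sub_re, Complex.ofReal_re, h1]
    simp only [zero_mul, zero_div, add_zero]
    linarith
  have hmre : 0 ≤ m.re := by rw [hmeq]; exact hre s t hs ht
  have hmkre : 0 ≤ mk.re := by rw [hmkeq]; exact hre s' t' hs' ht'
  have hdm_re : ∀ l, 0 ≤ ((d l : ℂ) * m).re := by
    intro l; rw [Complex.re_ofReal_mul]; exact mul_nonneg (hd l) hmre
  have hdmk_re : ∀ l, 0 ≤ ((d l : ℂ) * mk).re := by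
    intro l; rw [Complex.re_ofReal_mul]; exact mul_nonneg (hd l) hmkre
  have h1m : ∀ l, 1 ≤ ‖1 + (d l : ℂ) * m‖ :=
    fun l => aux_one_le_abs_one_add (hdm_re l)
  have h1mk : ∀ l, 1 ≤ ‖1 + (d l : ℂ) * mk‖ :=
    fun l => aux_one_le_abs_one_add (hdmk_re l)
  have hne_m : ∀ l, (1 + (d l : ℂ) * m) ≠ 0 := by
    intro l h; have := h1m l; rw [h, norm_zero] at this; linarith
  have hne_mk : ∀ l, (1 + (d l : ℂ) * mk) ≠ 0 := by
    intro l h; have := h1mk l; rw [h, norm_zero] at this; linarith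
  -- the summands
  set g : ℕ → ℂ := fun l => (d l : ℂ) * m / (1 + (d l : ℂ) * m) with hgdef
  set g' : ℕ → ℂ := fun l => if l = k then 0 else (d l : ℂ) * mk / (1 + (d l : ℂ) * mk)
    with hg'def
  set c : ℕ → ℂ := fun l =>
    if l = k then 0 else (d l : ℂ) / ((1 + (d l : ℂ) * mk) * (1 + (d l : ℂ) * m)) with hcdef
  -- norm bounds
  have hgb : ∀ l, ‖g l‖ ≤ d l * ‖m‖ := by
    intro l
    show ‖_‖ ≤ _
    simp only [hgdef, norm_div]
    calc ‖(d l : ℂ) * m‖ / ‖1 + (d l : ℂ) * m‖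
        ≤ ‖(d l : ℂ) * m‖ := div_le_self (norm_nonneg _) (h1m l)
      _ = d l * ‖m‖ := by
          rw [norm_mul, Complex.norm_real, Real.norm_eq_abs, abs_of_nonneg (hd l)]
  have hg'b : ∀ l, ‖g' l‖ ≤ d l * ‖mk‖ := by
    intro l
    show ‖_‖ ≤ _
    by_cases hl : l = k
    · subst hl
      simp only [hg'def, ↓reduceIte, norm_zero]
      exact mul_nonneg (hd l) (norm_nonneg _)
    · simp only [hg'def, if_neg hl, norm_div]
      calc ‖(d l : ℂ) * mk‖ / ‖1 + (d l : ℂ) * mk‖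
          ≤ ‖(d l : ℂ) * mk‖ := div_le_self (norm_nonneg _) (h1mk l)
        _ = d l * ‖mk‖ := by
            rw [norm_mul, Complex.norm_real, Real.norm_eq_abs, abs_of_nonneg (hd l)]
  have hcb : ∀ l, ‖c l‖ ≤ d l := by
    intro l
    show ‖_‖ ≤ _
    by_cases hl : l = k
    · subst hl
      simp only [hcdef, ↓reduceIte, norm_zero]
      exact hd l
    · simp only [hcdef, if_neg hl, norm_div, norm_mul, Complex.norm_real, Real.norm_eq_abs,
        abs_of_nonneg (hd l)]
      apply div_le_self (hd l)
      calc (1:ℝ) = 1 * 1 := (one_mul 1).symm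
        _ ≤ _ := mul_le_mul (h1mk l) (h1m l) zero_le_one (norm_nonneg _)
  -- summabilities
  have hsg : Summable g := Summable.of_norm_bounded (hsum.mul_right (‖m‖)) hgb
  have hsg' : Summable g' := Summable.of_norm_bounded (hsum.mul_right (‖mk‖)) hg'b
  have hsc : Summable c := Summable.of_norm_bounded hsum hcb
  set S : ℂ := ∑' l, g l with hSdef
  set S' : ℂ := ∑' l, g' l with hS'def
  set W : ℂ := ∑' l, c l with hWdef
  clear_value g g' c S S' W
  -- the fixed-point equations multiplied by z
  have e1 : z * m = -(1 - (1/(N:ℂ)) * S) := by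
    conv_lhs => rw [hm]
    field_simp
  have e2 : z * mk = -(1 - (1/(N:ℂ)) * S') := by
    conv_lhs => rw [hmk]
    field_simp
  -- pointwise difference identity
  have hdiff : ∀ l, g' l - g l = (if l = k then -(g k) else 0) + c l * (mk - m) := by
    intro l
    by_cases hl : l = k
    · subst hl
      simp [hg'def, hcdef]
    · simp only [hg'def, hgdef, hcdef, if_neg hl]
      rw [zero_add]
      field_simp [hne_m l, hne_mk l]
      ring
  have hsum_ite : HasSum (fun l => if l = k then -(g k) else 0) (-(g k)) :=
    hasSum_ite_eq k (-(g k))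
  have hsum_cmul : Summable (fun l => c l * (mk - m)) := hsc.mul_right _
  have hdiffsum : S' - S = -(g k) + W * (mk - m) := by
    rw [hS'def, hSdef, ← hsg'.tsum_sub hsg, tsum_congr hdiff,
      hsum_ite.summable.tsum_add hsum_cmul, hsum_ite.tsum_eq, hWdef, tsum_mul_right]
  -- main algebraic identity
  have emain : (mk - m) * (z - W / (N:ℂ)) = -(g k) / (N:ℂ) := by
    have e3 : z * (mk - m) = (1/(N:ℂ)) * (S' - S) := by
      rw [mul_sub, e1, e2]; ring
    rw [hdiffsum] at e3
    linear_combination e3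
  -- |g k| ≤ 1
  have hgk : ‖g k‖ ≤ 1 := by
    simp only [hgdef, norm_div]
    rw [div_le_one (lt_of_lt_of_le one_pos (h1m k))]
    exact aux_abs_le_abs_one_add (hdm_re k)
  -- key cone estimate : (conj z * c l).re ≤ 0
  have hcone : ∀ l, ((starRingEnd ℂ) z * c l).re ≤ 0 := by
    intro l
    by_cases hl : l = k
    · simp [hcdef, hl]
    · simp only [hcdef, if_neg hl]
      set p : ℂ := (1 + (d l : ℂ) * mk) * (1 + (d l : ℂ) * m) with hpdef
      clear_value p
      have hp0 : p ≠ 0 := by rw [hpdef]; exact mul_ne_zero (hne_mk l) (hne_m l)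
      have hnsqp : 0 < Complex.normSq p := Complex.normSq_pos.2 hp0
      have hdl : 0 ≤ d l := hd l
      have hkey : (z * p).re ≤ 0 := by
        have expand : z * p =
            (((1 + d l * s') * (1 + d l * s) : ℝ) : ℂ) * z
            - (((1 + d l * s') * (d l * t) : ℝ) : ℂ)
            - (((1 + d l * s) * (d l * t') : ℝ) : ℂ)
            + (((d l * t) * (d l * t') : ℝ) : ℂ) * z⁻¹ := by
          rw [hpdef, hmeq, hmkeq]
          push_cast
          field_simp
          ring
        rw [expand]
        simp only [Complex.add_re, Complex.sub_re, Complex.re_ofReal_mul,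
          Complex.ofReal_re, Complex.inv_re]
        have hA : 0 ≤ (1 + d l * s') * (1 + d l * s) :=
          mul_nonneg (by nlinarith [mul_nonneg hdl hs']) (by nlinarith [mul_nonneg hdl hs])
        have hB : 0 ≤ (1 + d l * s') * (d l * t) :=
          mul_nonneg (by nlinarith [mul_nonneg hdl hs']) (mul_nonneg hdl ht)
        have hC : 0 ≤ (1 + d l * s) * (d l * t') :=
          mul_nonneg (by nlinarith [mul_nonneg hdl hs]) (mul_nonneg hdl ht')
        have hD : 0 ≤ (d l * t) * (d l * t') :=
          mul_nonneg (mul_nonneg hdl ht) (mul_nonneg hdl ht')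
        have h1 : (1 + d l * s') * (1 + d l * s) * z.re ≤ 0 :=
          mul_nonpos_of_nonneg_of_nonpos hA hz.le
        have h2 : (d l * t) * (d l * t') * (z.re / Complex.normSq z) ≤ 0 :=
          mul_nonpos_of_nonneg_of_nonpos hD
            (div_nonpos_of_nonpos_of_nonneg hz.le hnsq.le)
        linarith
      have hcp0 : (starRingEnd ℂ) p ≠ 0 := by
        simpa using hp0
      have hrw : (starRingEnd ℂ) z * ((d l:ℂ)/p)
          = (((d l) * (Complex.normSq p)⁻¹ : ℝ) : ℂ) * (starRingEnd ℂ) (z*p) := by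
        have hmc : ((Complex.normSq p : ℝ) : ℂ) = p * (starRingEnd ℂ) p :=
          (Complex.mul_conj p).symm
        rw [Complex.ofReal_mul, Complex.ofReal_inv, map_mul, div_eq_mul_inv,
          Complex.inv_def]
        push_cast
        ring
      rw [hrw, Complex.re_ofReal_mul, Complex.conj_re]
      exact mul_nonpos_of_nonneg_of_nonpos
        (mul_nonneg hdl (inv_nonneg.2 hnsqp.le)) hkey
  -- hence (conj z * W).re ≤ 0
  have hW : ((starRingEnd ℂ) z * W).re ≤ 0 := by
    rw [hWdef, ← tsum_mul_left, Complex.re_tsum (hsc.mul_left _)]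
    exact tsum_nonpos hcone
  have hzW : (z * (starRingEnd ℂ) W).re ≤ 0 := by
    have : z * (starRingEnd ℂ) W = (starRingEnd ℂ) ((starRingEnd ℂ) z * W) := by
      rw [map_mul]; simp
    rw [this, Complex.conj_re]
    exact hW
  -- |z - W/N| ≥ |z|
  have habsW : ‖z‖ ≤ ‖z - W/(N:ℂ)‖ := by
    rw [Complex.norm_def, Complex.norm_def]
    apply Real.sqrt_le_sqrt
    rw [Complex.normSq_sub]
    have h1 : (z * (starRingEnd ℂ) (W/(N:ℂ))).re ≤ 0 := by
      have heq : ∀ w : ℂ, z * (starRingEnd ℂ) (w/(N:ℂ)) = (((N:ℝ)⁻¹ : ℝ) : ℂ) * (z * (starRingEnd ℂ) w) := by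
        intro w
        rw [map_div₀, map_natCast]
        push_cast
        ring
      rw [heq W, Complex.re_ofReal_mul]
      exact mul_nonpos_of_nonneg_of_nonpos (inv_nonneg.2 hNR.le) hzW
    linarith [Complex.normSq_nonneg (W/(N:ℂ))]
  -- conclusion
  have eabs : ‖mk - m‖ * ‖z - W/(N:ℂ)‖ = ‖g k‖ / N := by
    rw [← norm_mul, emain, norm_div, norm_neg, Complex.norm_natCast]
  have hfin : ‖mk - m‖ * ‖z‖ ≤ 1 / N := by
    calc ‖mk - m‖ * ‖z‖
        ≤ ‖mk - m‖ * ‖z - W/(N:ℂ)‖ :=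
          mul_le_mul_of_nonneg_left habsW (norm_nonneg _)
      _ = ‖g k‖ / N := eabs
      _ ≤ 1 / N := by gcongr
  rw [le_div_iff₀ (by positivity)]
  have hNinv : (1/(N:ℝ)) * N = 1 := one_div_mul_cancel hNR.ne'
  have h5 : ‖mk - m‖ * ‖z‖ * N ≤ (1/(N:ℝ)) * N :=
    mul_le_mul_of_nonneg_right hfin hNR.le
  calc ‖mk - m‖ * (‖z‖ * ↑N)
      = ‖mk - m‖ * ‖z‖ * N := by ring
    _ ≤ (1/(N:ℝ)) * N := h5
    _ = 1 := hNinv
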